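/- Let a,b≥0 with ab<1. Fix d∈ℕ, reals 0<θ₁<…<θ_d<θ_{d+1}=1, and reals 0<u_j<v_j for j=1,…,d+1 satisfying v_{d+1}−u_j < 1−θ_j for j=1,…,d. Fix r∈ℕ and ε>0. Then there exists N₀∈ℕ such that for all N≥N₀, P_N^{(0,a,b,0,0)}( Sep_N ∩ Val_N ) ≥ e^{−N^{4/5}} · P_N^{(0,a,b,0,0)}( Val_N ), where Val_N := {λ∈TL_N : h_N[λ](θ_j) ∈ (u_j,v_j) for j=1,…,d+1} and Sep_N := {λ∈TL_N : #{j∈{0,…,N} : λ₁(j)−λ₂(j) ≤ r} ≤ ⌈εN⌉}. Equivalently, whenever Val_N has positive probability, the conditional probability of Sep_N given Val_N is at least e^{−N^{4/5}}. -/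

import Mathlib

/-- A Bernoulli path on `{0,…,N}`: increments in `{0,1}`. -/
def IsBPath (N : ℕ) (L : Fin (N+1) → ℤ) : Prop :=
  ∀ j : Fin N, L j.succ = L j.castSucc ∨ L j.succ = L j.castSucc + 1

/-- The two-layer configuration space `TL_N`. -/
def TLset (N : ℕ) : Set ((Fin (N+1) → ℤ) × (Fin (N+1) → ℤ)) :=
  {p | p.1 0 = 0 ∧ (∀ j, p.2 j ≤ p.1 j) ∧ IsBPath N p.1 ∧ IsBPath N p.2}

/-- The open TASEP two-layer weight `wt_N^{(0,a,b,0,0)}(λ) = a^{λ₁(0)-λ₂(0)} b^{λ₁(N)-λ₂(N)}`. -/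
noncomputable def twt0 (N : ℕ) (a b : ℝ) (p : (Fin (N+1) → ℤ) × (Fin (N+1) → ℤ)) : ℝ :=
  a ^ (p.1 0 - p.2 0).toNat * b ^ (p.1 (Fin.last N) - p.2 (Fin.last N)).toNat

/-- The probability of the event `S` under the open TASEP two-layer measure
`P_N^{(0,a,b,0,0)}`. -/
noncomputable def Ptl0 (N : ℕ) (a b : ℝ) (S : Set ((Fin (N+1) → ℤ) × (Fin (N+1) → ℤ))) : ℝ :=
  (∑' p : TLset N, S.indicator (twt0 N a b) p.val) / ∑' p : TLset N, twt0 N a b p.val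

/-- The rescaled height profile `h_N[λ] : [0,1] → ℝ` of the first layer: it takes the value
`λ₁(k)/N` at `k/N` and is linearly interpolated in between. -/
noncomputable def heightTL (N : ℕ) (lam : Fin (N+1) → ℤ) (t : ℝ) : ℝ :=
  (N : ℝ)⁻¹ * ((lam 0 : ℝ) +
    ∑ k : Fin N, ((lam k.succ - lam k.castSucc : ℤ) : ℝ) * min 1 (max 0 ((N : ℝ) * t - (k : ℕ))))

namespace Stmt9

/-! ### capped indices and Bernoulli path basics -/

def idx (N k : ℕ) : Fin (N+1) := ⟨min k N, by omega⟩

lemma idx_val {N k : ℕ} (h : k ≤ N) : ((idx N k : Fin (N+1)) : ℕ) = k := by simp [idx, h]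

lemma idx_zero {N : ℕ} : idx N 0 = 0 := by apply Fin.ext; simp [idx]

lemma idx_last {N : ℕ} : idx N N = Fin.last N := by apply Fin.ext; simp [idx]

lemma idx_eq_self {N : ℕ} (j : Fin (N+1)) : idx N (j : ℕ) = j := by
  apply Fin.ext; simp [idx]; omega

lemma fin_succ_eq_idx {N : ℕ} (k : Fin N) : (k.succ : Fin (N+1)) = idx N ((k : ℕ) + 1) := by
  apply Fin.ext; simp [idx]; try omega

lemma fin_castSucc_eq_idx {N : ℕ} (k : Fin N) : (k.castSucc : Fin (N+1)) = idx N (k : ℕ) := by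
  apply Fin.ext; simp [idx]; try omega

lemma isBPath_step' {N : ℕ} {L : Fin (N+1) → ℤ} (hL : IsBPath N L) {k : ℕ} (hk : k < N) :
    L (idx N (k+1)) = L (idx N k) ∨ L (idx N (k+1)) = L (idx N k) + 1 := by
  have h1 : idx N (k+1) = (⟨k, hk⟩ : Fin N).succ := by apply Fin.ext; simp [idx]; omega
  have h2 : idx N k = (⟨k, hk⟩ : Fin N).castSucc := by apply Fin.ext; simp [idx]; omega
  rw [h1, h2]; exact hL ⟨k, hk⟩

/-! ### abstract step functions, hitting times -/

def StepFun (N : ℕ) (g : ℕ → ℤ) : Prop :=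
  g 0 = 0 ∧ ∀ k < N, g (k+1) = g k ∨ g (k+1) = g k + 1

open Classical in
noncomputable def hitF (N : ℕ) (g : ℕ → ℤ) (i : ℕ) : ℕ :=
  if h : ∃ k, k ≤ N ∧ (i:ℤ) + 1 ≤ g k then Nat.find h else N + 1

lemma StepFun.mono {N : ℕ} {g : ℕ → ℤ} (hg : StepFun N g) {k l : ℕ} (hkl : k ≤ l)
    (hl : l ≤ N) : g k ≤ g l := by
  induction l, hkl using Nat.le_induction with
  | base => exact le_refl _
  | succ n hn ih => have h := hg.2 n (by omega); have := ih (by omega); omega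

lemma StepFun.nonneg {N : ℕ} {g : ℕ → ℤ} (hg : StepFun N g) {k : ℕ} (hk : k ≤ N) :
    0 ≤ g k := by
  have h0 := hg.1; have := hg.mono (Nat.zero_le k) hk; omega

lemma StepFun.le_self {N : ℕ} {g : ℕ → ℤ} (hg : StepFun N g) {k : ℕ} (hk : k ≤ N) :
    g k ≤ (k : ℤ) := by
  induction k with
  | zero => simp [hg.1]
  | succ n ih =>
      have h := hg.2 n (by omega)
      have := ih (by omega)
      push_cast
      omega

lemma hit_le_iff {N : ℕ} {g : ℕ → ℤ} (hg : StepFun N g) (i : ℕ) {k : ℕ} (hk : k ≤ N) :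
    hitF N g i ≤ k ↔ (i:ℤ) + 1 ≤ g k := by
  classical
  unfold hitF
  split
  · next h =>
      constructor
      · intro hle
        obtain ⟨h1, h2⟩ := Nat.find_spec h
        exact le_trans h2 (hg.mono hle hk)
      · intro hgk
        exact Nat.find_le ⟨hk, hgk⟩
  · next h =>
      constructor
      · intro hle; omega
      · intro hgk; exact absurd ⟨k, hk, hgk⟩ h

lemma hit_le_succ {N : ℕ} {g : ℕ → ℤ} (i : ℕ) : hitF N g i ≤ N + 1 := by
  classical
  unfold hitF
  split
  · next h => have := (Nat.find_spec h).1; omega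
  · exact le_refl _

lemma card_fin_lt (c m : ℕ) :
    (Finset.univ.filter fun i : Fin c => (i : ℕ) < m).card = min m c := by
  rw [Finset.card_filter]
  rw [Fin.sum_univ_eq_sum_range (fun i => if i < m then (1:ℕ) else 0) c]
  rw [← Finset.card_filter]
  have : (Finset.range c).filter (fun i => i < m) = Finset.range (min m c) := by
    ext x; simp; omega
  rw [this, Finset.card_range]

lemma card_hit {N : ℕ} {g : ℕ → ℤ} (hg : StepFun N g) (c : ℕ) {k : ℕ} (hk : k ≤ N) :
    ((Finset.univ.filter fun i : Fin c => hitF N g i ≤ k).card : ℤ) = min (g k) c := by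
  have hnn : 0 ≤ g k := hg.nonneg hk
  have : (Finset.univ.filter fun i : Fin c => hitF N g i ≤ k)
      = (Finset.univ.filter fun i : Fin c => (i : ℕ) < (g k).toNat) := by
    apply Finset.filter_congr
    intro i _
    rw [hit_le_iff hg i hk]
    omega
  rw [this, card_fin_lt]
  omega

/-! ### up-counts and flat-counts of a path -/

def gup (N : ℕ) (L : Fin (N+1) → ℤ) : ℕ → ℤ := fun k => L (idx N k) - L 0

def gflat (N : ℕ) (L : Fin (N+1) → ℤ) : ℕ → ℤ :=
  fun k => (k : ℤ) - (L (Fin.last N) - L (idx N (N - k)))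

lemma stepFun_gup {N : ℕ} {L : Fin (N+1) → ℤ} (hL : IsBPath N L) : StepFun N (gup N L) := by
  constructor
  · simp [gup, idx_zero]
  · intro k hk
    rcases isBPath_step' hL hk with h | h
    · left; simp only [gup]; omega
    · right; simp only [gup]; omega

lemma stepFun_gflat {N : ℕ} {L : Fin (N+1) → ℤ} (hL : IsBPath N L) : StepFun N (gflat N L) := by
  constructor
  · simp [gflat, idx_last]
  · intro k hk
    have e1 : N - (k+1) = N - k - 1 := by omega
    have e2 : N - k - 1 + 1 = N - k := by omega
    have h := isBPath_step' hL (k := N - k - 1) (by omega)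
    rw [e2] at h
    rcases h with h | h
    · right; simp only [gflat, e1]; push_cast; omega
    · left; simp only [gflat, e1]; push_cast; omega

lemma gflat_eval {N : ℕ} {L : Fin (N+1) → ℤ} {k : ℕ} (hk : k ≤ N) :
    gflat N L (N - k) = ((N : ℤ) - k) - (L (Fin.last N) - L (idx N k)) := by
  have e : N - (N - k) = k := by omega
  simp only [gflat, e]
  push_cast [Nat.cast_sub hk]
  ring

lemma ups_nonneg {N : ℕ} {L : Fin (N+1) → ℤ} (hL : IsBPath N L) :
    0 ≤ L (Fin.last N) - L 0 := by
  have := (stepFun_gup hL).mono (Nat.zero_le N) (le_refl N)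
  simp only [gup, idx_zero, idx_last] at this
  omega

lemma ups_le {N : ℕ} {L : Fin (N+1) → ℤ} (hL : IsBPath N L) :
    L (Fin.last N) - L 0 ≤ (N : ℤ) := by
  have := (stepFun_gup hL).le_self (le_refl N)
  simp only [gup, idx_last] at this
  omega

/-! ### the surgery map -/

def Tmap (N s w e : ℕ) (L : Fin (N+1) → ℤ) : Fin (N+1) → ℤ :=
  fun j => max (L j - s) (max (L 0 + min ((j:ℕ) : ℤ) w)
    (L (Fin.last N) + min (((j:ℕ) : ℤ) - N + e) 0))

lemma tmap_isBPath {N s w e : ℕ} {L : Fin (N+1) → ℤ} (hL : IsBPath N L) :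
    IsBPath N (Tmap N s w e L) := by
  intro j
  have h := hL j
  simp only [Tmap, Fin.val_succ, Fin.coe_castSucc] at *
  push_cast
  omega

lemma tmap_zero {N s w e : ℕ} {L : Fin (N+1) → ℤ} (hL : IsBPath N L)
    (he : (e : ℤ) ≤ (N : ℤ) - (L (Fin.last N) - L 0)) :
    Tmap N s w e L 0 = L 0 := by
  have hu := ups_nonneg hL
  simp only [Tmap, Fin.val_zero]
  push_cast
  omega

lemma tmap_last {N s w e : ℕ} {L : Fin (N+1) → ℤ} (hL : IsBPath N L)
    (hw : (w : ℤ) ≤ L (Fin.last N) - L 0) :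
    Tmap N s w e L (Fin.last N) = L (Fin.last N) := by
  simp only [Tmap, Fin.val_last]
  push_cast
  omega

lemma tmap_eq_self {N w e : ℕ} {L : Fin (N+1) → ℤ} {k : ℕ} (hk : k ≤ N)
    (h1 : (w : ℤ) ≤ L (idx N k) - L 0)
    (h2 : (e : ℤ) ≤ ((N : ℤ) - k) - (L (Fin.last N) - L (idx N k))) :
    Tmap N 0 w e L (idx N k) = L (idx N k) := by
  simp only [Tmap, idx_val hk]
  push_cast
  omega

lemma reconstruct {N s w e c : ℕ} {L : Fin (N+1) → ℤ} (hL : IsBPath N L)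
    (hc1 : c = s + w) (hc2 : c = s + e)
    (hw : (w : ℤ) ≤ L (Fin.last N) - L 0)
    (he : (e : ℤ) ≤ (N : ℤ) - (L (Fin.last N) - L 0))
    {k : ℕ} (hk : k ≤ N) :
    L (idx N k) =
      if ((Finset.univ.filter fun i : Fin c => hitF N (gup N L) i ≤ k).card) < c then
        Tmap N s w e L 0 + ((Finset.univ.filter fun i : Fin c => hitF N (gup N L) i ≤ k).card)
      else if ((Finset.univ.filter fun i : Fin c => hitF N (gflat N L) i ≤ N - k).card) < c then
        Tmap N s w e L (Fin.last N) - ((N : ℤ) - k)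
          + ((Finset.univ.filter fun i : Fin c => hitF N (gflat N L) i ≤ N - k).card)
      else Tmap N s w e L (idx N k) + s := by
  have hz := tmap_zero (s := s) (w := w) (e := e) hL he
  have hl := tmap_last (s := s) (w := w) (e := e) hL hw
  have hA1 := card_hit (stepFun_gup hL) c hk
  have hA2 := card_hit (stepFun_gflat hL) c (k := N - k) (by omega)
  rw [gflat_eval hk] at hA2
  have hgup : gup N L k = L (idx N k) - L 0 := rfl
  rw [hgup] at hA1
  by_cases b1 : ((Finset.univ.filter fun i : Fin c => hitF N (gup N L) i ≤ k).card) < c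
  · rw [if_pos b1, hz]
    omega
  · rw [if_neg b1]
    by_cases b2 : ((Finset.univ.filter fun i : Fin c => hitF N (gflat N L) i ≤ N - k).card) < c
    · rw [if_pos b2, hl]
      omega
    · rw [if_neg b2]
      simp only [Tmap, idx_val hk]
      omega

lemma tmap_sep {N c : ℕ} {L1 L2 : Fin (N+1) → ℤ} (h12 : ∀ j, L2 j ≤ L1 j) (h0 : L1 0 = 0)
    {k : ℕ} (hck : c ≤ k) (hkc : k ≤ N - c) :
    (c : ℤ) ≤ Tmap N 0 c c L1 (idx N k) - Tmap N c 0 0 L2 (idx N k) := by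
  have hkN : k ≤ N := by omega
  have hcN : c ≤ N := by omega
  have h1 := h12 (idx N k)
  have h2 := h12 0
  have h3 := h12 (Fin.last N)
  simp only [Tmap, idx_val hkN]
  have hc1 : (c : ℤ) ≤ (k : ℤ) := by exact_mod_cast hck
  have hc2 : (k : ℤ) ≤ (N : ℤ) - c := by
    have : k + c ≤ N := by omega
    have : ((k + c : ℕ) : ℤ) ≤ (N : ℤ) := by exact_mod_cast this
    push_cast at this
    omega
  omega

lemma tmap_le {N c : ℕ} {L1 L2 : Fin (N+1) → ℤ} (h12 : ∀ j, L2 j ≤ L1 j) (j : Fin (N+1)) :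
    Tmap N c 0 0 L2 j ≤ Tmap N 0 c c L1 j := by
  have h1 := h12 j
  have h2 := h12 0
  have h3 := h12 (Fin.last N)
  simp only [Tmap]
  have : (0:ℤ) ≤ ((j:ℕ):ℤ) := by positivity
  omega

/-! ### height function lemmas -/

lemma heightTL_sum (N : ℕ) (L : Fin (N+1) → ℤ) (t : ℝ) :
    heightTL N L t = (N : ℝ)⁻¹ * ((L 0 : ℝ) +
      ∑ k ∈ Finset.range N,
        ((L (idx N (k+1)) : ℝ) - (L (idx N k) : ℝ)) * min 1 (max 0 ((N : ℝ) * t - k))) := by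
  unfold heightTL
  congr 2
  rw [← Fin.sum_univ_eq_sum_range
    (fun k => ((L (idx N (k+1)) : ℝ) - (L (idx N k) : ℝ)) * min 1 (max 0 ((N : ℝ) * t - k))) N]
  apply Finset.sum_congr rfl
  intro k _
  rw [fin_succ_eq_idx, fin_castSucc_eq_idx]
  push_cast
  ring

lemma heightTL_one {N : ℕ} (hN : 1 ≤ N) (L : Fin (N+1) → ℤ) :
    heightTL N L 1 = (L (Fin.last N) : ℝ) / N := by
  rw [heightTL_sum]
  have : ∀ k ∈ Finset.range N,
      ((L (idx N (k+1)) : ℝ) - (L (idx N k) : ℝ)) * min 1 (max 0 ((N : ℝ) * 1 - k))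
        = (L (idx N (k+1)) : ℝ) - (L (idx N k) : ℝ) := by
    intro k hk
    simp only [Finset.mem_range] at hk
    have h1 : (1 : ℝ) ≤ (N : ℝ) * 1 - k := by
      have : (k : ℝ) + 1 ≤ N := by exact_mod_cast hk
      linarith
    rw [max_eq_right (by linarith), min_eq_left h1, mul_one]
  rw [Finset.sum_congr rfl this, Finset.sum_range_sub (fun k => (L (idx N k) : ℝ))]
  rw [idx_last, idx_zero]
  field_simp
  ring

lemma heightTL_interp {N : ℕ} (L : Fin (N+1) → ℤ) {t : ℝ} {m : ℕ} (hm : m < N)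
    (h1 : (m : ℝ) ≤ (N : ℝ) * t) (h2 : (N : ℝ) * t ≤ (m : ℝ) + 1) :
    (N : ℝ) * heightTL N L t =
      (L (idx N m) : ℝ) + ((N : ℝ) * t - m) * ((L (idx N (m+1)) : ℝ) - (L (idx N m) : ℝ)) := by
  have hN : (N : ℝ) ≠ 0 := by
    have : 0 < N := by omega
    exact_mod_cast this.ne'
  rw [heightTL_sum, ← mul_assoc, mul_inv_cancel₀ hN, one_mul]
  have hsplit : Finset.range N = Finset.range (m+1) ∪ Finset.Ico (m+1) N := by
    rw [Finset.range_eq_Ico, Finset.range_eq_Ico]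
    rw [Finset.Ico_union_Ico_eq_Ico (by omega : 0 ≤ m+1) (by omega : m+1 ≤ N)]
  rw [hsplit, Finset.sum_union (by
    rw [Finset.range_eq_Ico]
    exact Finset.Ico_disjoint_Ico_consecutive 0 (m+1) N)]
  have hz : ∑ k ∈ Finset.Ico (m+1) N,
      ((L (idx N (k+1)) : ℝ) - (L (idx N k) : ℝ)) * min 1 (max 0 ((N : ℝ) * t - k)) = 0 := by
    apply Finset.sum_eq_zero
    intro k hk
    simp only [Finset.mem_Ico] at hk
    have : (N : ℝ) * t - k ≤ 0 := by
      have : (m : ℝ) + 1 ≤ (k : ℝ) := by exact_mod_cast hk.1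
      linarith
    rw [max_eq_left this, min_eq_right (by norm_num), mul_zero]
  rw [hz, add_zero, Finset.sum_range_succ]
  have hones : ∀ k ∈ Finset.range m,
      ((L (idx N (k+1)) : ℝ) - (L (idx N k) : ℝ)) * min 1 (max 0 ((N : ℝ) * t - k))
        = (L (idx N (k+1)) : ℝ) - (L (idx N k) : ℝ) := by
    intro k hk
    simp only [Finset.mem_range] at hk
    have : (k : ℝ) + 1 ≤ (m : ℝ) := by exact_mod_cast hk
    rw [max_eq_right (by linarith), min_eq_left (by linarith), mul_one]
  rw [Finset.sum_congr rfl hones, Finset.sum_range_sub (fun k => (L (idx N k) : ℝ))]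
  rw [idx_zero]
  rw [max_eq_right (by linarith : (0:ℝ) ≤ (N : ℝ) * t - m),
    min_eq_right (by linarith : (N : ℝ) * t - m ≤ 1)]
  ring

/-- from a window `u' < h(θ') < v'` at an interior point, bounds on the path at
`m = ⌊Nθ'⌋` and `m+1`. -/
lemma window_bounds {N : ℕ} {L : Fin (N+1) → ℤ} (hL : IsBPath N L) {θ' u' v' : ℝ}
    (hθ1 : 0 < θ') (hθ2 : θ' < 1) (hN : 1 ≤ N)
    (hh : heightTL N L θ' ∈ Set.Ioo u' v') :
    let m := ⌊(N:ℝ) * θ'⌋₊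
    m < N ∧
    (N:ℝ) * u' - 1 < (L (idx N m) : ℝ) ∧ ((L (idx N m) : ℝ)) < N * v' ∧
    (N:ℝ) * u' < (L (idx N (m+1)) : ℝ) ∧ ((L (idx N (m+1)) : ℝ)) < N * v' + 1 := by
  intro m
  have hNpos : (0:ℝ) < N := by exact_mod_cast hN
  have hfl : (m : ℝ) ≤ (N:ℝ) * θ' := Nat.floor_le (by positivity)
  have hfu : (N:ℝ) * θ' < (m : ℝ) + 1 := Nat.lt_floor_add_one _
  have hmN : m < N := by
    have : (m:ℝ) < (N:ℝ) := lt_of_le_of_lt hfl (by nlinarith)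
    exact_mod_cast this
  have hint := heightTL_interp L hmN hfl (le_of_lt hfu)
  have hstep := isBPath_step' hL hmN
  obtain ⟨hh1, hh2⟩ := hh
  have hub : (N:ℝ) * u' < (N:ℝ) * heightTL N L θ' := by
    exact mul_lt_mul_of_pos_left hh1 hNpos
  have hvb : (N:ℝ) * heightTL N L θ' < (N:ℝ) * v' := mul_lt_mul_of_pos_left hh2 hNpos
  have hfrac0 : (0:ℝ) ≤ (N:ℝ) * θ' - m := by linarith
  have hfrac1 : (N:ℝ) * θ' - m ≤ 1 := by linarith
  rcases hstep with h | h
  · rw [h] at hint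
    refine ⟨hmN, ?_, ?_, ?_, ?_⟩ <;> rw [h] at * <;> nlinarith [hint]
  · have hcast : (L (idx N (m+1)) : ℝ) = (L (idx N m) : ℝ) + 1 := by
      rw [h]; push_cast; ring
    rw [hcast] at hint
    refine ⟨hmN, ?_, ?_, ?_, ?_⟩ <;> rw [hcast] at * <;> nlinarith [hint]


/-! ### the two-layer surgery, data, and injectivity -/

abbrev PairN (N : ℕ) := (Fin (N+1) → ℤ) × (Fin (N+1) → ℤ)

def PhiMap (N c : ℕ) (p : PairN N) : PairN N := (Tmap N 0 c c p.1, Tmap N c 0 0 p.2)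

def capN (N n : ℕ) : Fin (N+2) := ⟨min n (N+1), by omega⟩

abbrev DataT (N c : ℕ) :=
  ((Fin c → Fin (N+2)) × (Fin c → Fin (N+2))) × ((Fin c → Fin (N+2)) × (Fin c → Fin (N+2)))

lemma card_dataT (N c : ℕ) : Fintype.card (DataT N c) = (N+2)^(4*c) := by
  have h : Fintype.card (Fin c → Fin (N+2)) = (N+2)^c := by
    simp [Fintype.card_fun]
  show Fintype.card ((((Fin c → Fin (N+2)) × (Fin c → Fin (N+2))) ×
    ((Fin c → Fin (N+2)) × (Fin c → Fin (N+2))))) = (N+2)^(4*c)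
  simp only [Fintype.card_prod, h]
  ring

noncomputable def dataOf (N c : ℕ) (p : PairN N) : DataT N c :=
  ((fun i => capN N (hitF N (gup N p.1) i), fun i => capN N (hitF N (gflat N p.1) i)),
   (fun i => capN N (hitF N (gup N p.2) i), fun i => capN N (hitF N (gflat N p.2) i)))

lemma capN_inj {N a b' : ℕ} (ha : a ≤ N + 1) (hb : b' ≤ N + 1) (h : capN N a = capN N b') :
    a = b' := by
  simp only [capN, Fin.mk.injEq] at h
  omega

lemma tl_snd_ups_nonneg {N : ℕ} {p : PairN N} (hp : p ∈ TLset N) :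
    (0 : ℤ) ≤ p.2 (Fin.last N) - p.2 0 := ups_nonneg hp.2.2.2

lemma tl_snd_ups_le {N : ℕ} {p : PairN N} (hp : p ∈ TLset N) :
    p.2 (Fin.last N) - p.2 0 ≤ (N : ℤ) := ups_le hp.2.2.2

/-- key injectivity: the pair is recoverable from its image and the hitting-time data. -/
lemma phi_inj {N c : ℕ} {p q : PairN N} (hp : p ∈ TLset N) (hq : q ∈ TLset N)
    (hwp : (c:ℤ) ≤ p.1 (Fin.last N) - p.1 0)
    (hep : (c:ℤ) ≤ (N:ℤ) - (p.1 (Fin.last N) - p.1 0))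
    (hwq : (c:ℤ) ≤ q.1 (Fin.last N) - q.1 0)
    (heq' : (c:ℤ) ≤ (N:ℤ) - (q.1 (Fin.last N) - q.1 0))
    (hT : PhiMap N c p = PhiMap N c q) (hD : dataOf N c p = dataOf N c q) : p = q := by
  have hT1 : Tmap N 0 c c p.1 = Tmap N 0 c c q.1 := congrArg Prod.fst hT
  have hT2 : Tmap N c 0 0 p.2 = Tmap N c 0 0 q.2 := congrArg Prod.snd hT
  have hD11 : ∀ i : Fin c, hitF N (gup N p.1) i = hitF N (gup N q.1) i := by
    intro i
    exact capN_inj (hit_le_succ i) (hit_le_succ i) (congrFun (congrArg (Prod.fst ∘ Prod.fst) hD) i)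
  have hD12 : ∀ i : Fin c, hitF N (gflat N p.1) i = hitF N (gflat N q.1) i := by
    intro i
    exact capN_inj (hit_le_succ i) (hit_le_succ i) (congrFun (congrArg (Prod.snd ∘ Prod.fst) hD) i)
  have hD21 : ∀ i : Fin c, hitF N (gup N p.2) i = hitF N (gup N q.2) i := by
    intro i
    exact capN_inj (hit_le_succ i) (hit_le_succ i) (congrFun (congrArg (Prod.fst ∘ Prod.snd) hD) i)
  have hD22 : ∀ i : Fin c, hitF N (gflat N p.2) i = hitF N (gflat N q.2) i := by
    intro i
    exact capN_inj (hit_le_succ i) (hit_le_succ i) (congrFun (congrArg (Prod.snd ∘ Prod.snd) hD) i)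
  have layer : ∀ (L M : Fin (N+1) → ℤ) (s w e : ℕ), IsBPath N L → IsBPath N M →
      c = s + w → c = s + e →
      (w:ℤ) ≤ L (Fin.last N) - L 0 → (e:ℤ) ≤ (N:ℤ) - (L (Fin.last N) - L 0) →
      (w:ℤ) ≤ M (Fin.last N) - M 0 → (e:ℤ) ≤ (N:ℤ) - (M (Fin.last N) - M 0) →
      Tmap N s w e L = Tmap N s w e M →
      (∀ i : Fin c, hitF N (gup N L) i = hitF N (gup N M) i) →
      (∀ i : Fin c, hitF N (gflat N L) i = hitF N (gflat N M) i) →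
      L = M := by
    intro L M s w e hL hM hc1 hc2 hwL heL hwM heM hTe hU hK
    funext j
    have hk : (j : ℕ) ≤ N := by omega
    have e1 : (Finset.univ.filter fun i : Fin c => hitF N (gup N L) i ≤ (j:ℕ))
        = (Finset.univ.filter fun i : Fin c => hitF N (gup N M) i ≤ (j:ℕ)) := by
      apply Finset.filter_congr; intro i _; rw [hU i]
    have e2 : (Finset.univ.filter fun i : Fin c => hitF N (gflat N L) i ≤ N - (j:ℕ))
        = (Finset.univ.filter fun i : Fin c => hitF N (gflat N M) i ≤ N - (j:ℕ)) := by
      apply Finset.filter_congr; intro i _; rw [hK i]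
    have r1 := reconstruct hL hc1 hc2 hwL heL hk
    have r2 := reconstruct hM hc1 hc2 hwM heM hk
    rw [idx_eq_self] at r1 r2
    rw [r1, r2, hTe, e1, e2]
  refine Prod.ext ?_ ?_
  · exact layer p.1 q.1 0 c c hp.2.2.1 hq.2.2.1 (by omega) (by omega)
      (by omega) (by omega) (by omega) (by omega) hT1 hD11 hD12
  · have h1 := tl_snd_ups_nonneg hp
    have h2 := tl_snd_ups_le hp
    have h3 := tl_snd_ups_nonneg hq
    have h4 := tl_snd_ups_le hq
    exact layer p.2 q.2 c 0 0 hp.2.2.2 hq.2.2.2 (by omega) (by omega)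
      (by omega) (by omega) (by omega) (by omega) hT2 hD21 hD22

/-- the image is in `TLset` -/
lemma phi_mem_TL {N c : ℕ} {p : PairN N} (hp : p ∈ TLset N)
    (hep : (c:ℤ) ≤ (N:ℤ) - (p.1 (Fin.last N) - p.1 0)) :
    PhiMap N c p ∈ TLset N := by
  obtain ⟨h0, h12, hB1, hB2⟩ := hp
  refine ⟨?_, ?_, tmap_isBPath hB1, tmap_isBPath hB2⟩
  · show Tmap N 0 c c p.1 0 = 0
    rw [tmap_zero hB1 (by omega)]
    exact h0
  · intro j
    exact tmap_le h12 j

/-- endpoint gaps, hence the weight, are preserved -/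
lemma phi_weight {N c : ℕ} (a b : ℝ) {p : PairN N} (hp : p ∈ TLset N)
    (hwp : (c:ℤ) ≤ p.1 (Fin.last N) - p.1 0)
    (hep : (c:ℤ) ≤ (N:ℤ) - (p.1 (Fin.last N) - p.1 0)) :
    twt0 N a b (PhiMap N c p) = twt0 N a b p := by
  obtain ⟨h0, h12, hB1, hB2⟩ := hp
  have hz1 : Tmap N 0 c c p.1 0 = p.1 0 := tmap_zero hB1 (by omega)
  have hz2 : Tmap N c 0 0 p.2 0 = p.2 0 := by
    have := tl_snd_ups_le ⟨h0, h12, hB1, hB2⟩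
    exact tmap_zero hB2 (by push_cast; omega)
  have hl1 : Tmap N 0 c c p.1 (Fin.last N) = p.1 (Fin.last N) := tmap_last hB1 (by omega)
  have hl2 : Tmap N c 0 0 p.2 (Fin.last N) = p.2 (Fin.last N) := by
    have := tl_snd_ups_nonneg ⟨h0, h12, hB1, hB2⟩
    exact tmap_last hB2 (by push_cast; omega)
  unfold twt0 PhiMap
  simp only [hz1, hz2, hl1, hl2]

/-- separation: at most `2c` sites have gap `≤ r` after the surgery. -/
lemma phi_sep_card {N c r : ℕ} {p : PairN N} (hp : p ∈ TLset N) (hrc : (r:ℤ) < c) :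
    (Finset.univ.filter
      (fun j : Fin (N+1) => (PhiMap N c p).1 j - (PhiMap N c p).2 j ≤ (r : ℤ))).card
      ≤ 2 * c := by
  classical
  obtain ⟨h0, h12, hB1, hB2⟩ := hp
  by_cases hcN : c ≤ N
  case neg =>
    calc (Finset.univ.filter
        (fun j : Fin (N+1) => (PhiMap N c p).1 j - (PhiMap N c p).2 j ≤ (r : ℤ))).card
        ≤ Finset.univ.card := Finset.card_filter_le _ _
      _ = N + 1 := by simp
      _ ≤ 2 * c := by omega
  case pos =>
  have hsub : (Finset.univ.filter
      (fun j : Fin (N+1) => (PhiMap N c p).1 j - (PhiMap N c p).2 j ≤ (r : ℤ)))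
      ⊆ (Finset.univ.filter fun j : Fin (N+1) => (j:ℕ) < c)
        ∪ (Finset.univ.filter fun j : Fin (N+1) => ¬ ((j:ℕ) < N - c + 1)) := by
    intro j hj
    simp only [Finset.mem_filter, Finset.mem_univ, true_and] at hj
    simp only [Finset.mem_union, Finset.mem_filter, Finset.mem_univ, true_and]
    by_contra hcon
    push_neg at hcon
    obtain ⟨hc1, hc2⟩ := hcon
    have hgap := tmap_sep h12 h0 (k := (j:ℕ)) hc1 (by omega)
    rw [idx_eq_self] at hgap
    have : (PhiMap N c p).1 j - (PhiMap N c p).2 j = Tmap N 0 c c p.1 j - Tmap N c 0 0 p.2 j := rfl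
    omega
  calc (Finset.univ.filter
      (fun j : Fin (N+1) => (PhiMap N c p).1 j - (PhiMap N c p).2 j ≤ (r : ℤ))).card
      ≤ ((Finset.univ.filter fun j : Fin (N+1) => (j:ℕ) < c)
        ∪ (Finset.univ.filter fun j : Fin (N+1) => ¬ ((j:ℕ) < N - c + 1))).card :=
        Finset.card_le_card hsub
    _ ≤ (Finset.univ.filter fun j : Fin (N+1) => (j:ℕ) < c).card
        + (Finset.univ.filter fun j : Fin (N+1) => ¬ ((j:ℕ) < N - c + 1)).card :=
        Finset.card_union_le _ _
    _ ≤ 2 * c := by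
        have hA := card_fin_lt (N+1) c
        have hB := card_fin_lt (N+1) (N - c + 1)
        have hC := Finset.card_filter_add_card_filter_not
          (s := (Finset.univ : Finset (Fin (N+1)))) (p := fun j : Fin (N+1) => (j:ℕ) < N - c + 1)
        have hU : (Finset.univ : Finset (Fin (N+1))).card = N + 1 := by simp
        omega


/-! ### consequences of the Val window conditions -/

lemma val_facts {N c : ℕ} {d : ℕ} {θ u v : Fin (d+1) → ℝ} (hd : 1 ≤ d)
    (hθ0 : 0 < θ 0) (hθmono : StrictMono θ) (hθlast : θ (Fin.last d) = 1)
    (hN : 1 ≤ N)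
    (hC2 : ∀ j : Fin (d+1), (c:ℝ) + 2 ≤ (N:ℝ) * u j)
    (hC3 : ∀ j : Fin d, (c:ℝ) + 2 ≤
      (N:ℝ) * ((1 - θ j.castSucc) - (v (Fin.last d) - u j.castSucc)))
    {p : PairN N} (hp : p ∈ TLset N)
    (hval : ∀ j : Fin (d+1), heightTL N p.1 (θ j) ∈ Set.Ioo (u j) (v j)) :
    ((c:ℤ) ≤ p.1 (Fin.last N) - p.1 0) ∧ ((c:ℤ) ≤ (N:ℤ) - (p.1 (Fin.last N) - p.1 0)) ∧
    (∀ j : Fin (d+1), heightTL N (Tmap N 0 c c p.1) (θ j) = heightTL N p.1 (θ j)) := by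
  obtain ⟨h0, h12, hB1, hB2⟩ := hp
  set L := p.1 with hL
  have hNpos : (0:ℝ) < N := by exact_mod_cast hN
  -- window at θ = 1
  have hlast := hval (Fin.last d)
  rw [hθlast, heightTL_one hN] at hlast
  obtain ⟨hlast1, hlast2⟩ := hlast
  have hLlast_lo : (N:ℝ) * u (Fin.last d) < (L (Fin.last N) : ℝ) := by
    rw [lt_div_iff₀ hNpos] at hlast1; linarith
  have hLlast_hi : (L (Fin.last N) : ℝ) < (N:ℝ) * v (Fin.last d) := by
    rw [div_lt_iff₀ hNpos] at hlast2; linarith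
  -- F1 : at least c up steps
  have hF1 : (c:ℤ) ≤ L (Fin.last N) - L 0 := by
    rw [h0, sub_zero]
    have : (c:ℝ) < (L (Fin.last N) : ℝ) := lt_of_lt_of_le (by nlinarith [hC2 (Fin.last d)])
      (le_of_lt hLlast_lo)
    exact_mod_cast le_of_lt this
  -- interior window bounds, for each i : Fin d
  have hwin : ∀ i : Fin d,
      let m := ⌊(N:ℝ) * θ i.castSucc⌋₊
      m < N ∧
      ((c:ℤ) ≤ L (idx N m) - L 0) ∧
      ((c:ℤ) ≤ ((N:ℤ) - m) - (L (Fin.last N) - L (idx N m))) ∧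
      ((c:ℤ) ≤ L (idx N (m+1)) - L 0) ∧
      ((c:ℤ) ≤ ((N:ℤ) - (m+1)) - (L (Fin.last N) - L (idx N (m+1)))) := by
    intro i
    have hθpos : 0 < θ i.castSucc := lt_of_lt_of_le hθ0 (hθmono.monotone (Fin.zero_le _))
    have hθlt1 : θ i.castSucc < 1 := by
      rw [← hθlast]; exact hθmono (Fin.castSucc_lt_last i)
    have hw := window_bounds hB1 hθpos hθlt1 hN (hval i.castSucc)
    obtain ⟨hmN, hb1, hb2, hb3, hb4⟩ := hw
    set m := ⌊(N:ℝ) * θ i.castSucc⌋₊ with hm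
    have hfl : (m : ℝ) ≤ (N:ℝ) * θ i.castSucc := Nat.floor_le (by positivity)
    have hu' := hC2 i.castSucc
    have hδ := hC3 i
    have hmR : (m : ℝ) < N := by exact_mod_cast hmN
    refine ⟨hmN, ?_, ?_, ?_, ?_⟩
    · rw [h0, sub_zero]
      have : (c:ℝ) < (L (idx N m) : ℝ) := by nlinarith
      exact_mod_cast le_of_lt this
    · have : (c:ℝ) < ((N:ℝ) - m) - ((L (Fin.last N) : ℝ) - (L (idx N m) : ℝ)) := by
        nlinarith
      have h' : ((c:ℤ):ℝ) < ((((N:ℤ) - m) - (L (Fin.last N) - L (idx N m)) : ℤ) : ℝ) := by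
        push_cast
        push_cast at this
        linarith
      exact_mod_cast le_of_lt h'
    · rw [h0, sub_zero]
      have : (c:ℝ) < (L (idx N (m+1)) : ℝ) := by nlinarith
      exact_mod_cast le_of_lt this
    · have : (c:ℝ) < ((N:ℝ) - (m+1)) - ((L (Fin.last N) : ℝ) - (L (idx N (m+1)) : ℝ)) := by
        nlinarith
      have h' : ((c:ℤ):ℝ) < ((((N:ℤ) - (m+1)) - (L (Fin.last N) - L (idx N (m+1))) : ℤ) : ℝ) := by
        push_cast
        push_cast at this
        linarith
      exact_mod_cast le_of_lt h'
  -- F2 : at least c flat steps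
  have hF2 : (c:ℤ) ≤ (N:ℤ) - (L (Fin.last N) - L 0) := by
    obtain ⟨hmN, hw1, hw2, hw3, hw4⟩ := hwin ⟨0, by omega⟩
    set m := ⌊(N:ℝ) * θ (⟨0, by omega⟩ : Fin d).castSucc⌋₊ with hm
    have hle : L (idx N m) - L 0 ≤ (m:ℤ) := by
      have := (stepFun_gup hB1).le_self (k := m) (by omega)
      simpa [gup] using this
    omega
  refine ⟨hF1, hF2, ?_⟩
  -- F3 : the height profile at the windows is unchanged by the surgery
  intro j
  induction j using Fin.lastCases with
  | last =>
      rw [hθlast, heightTL_one hN, heightTL_one hN, tmap_last hB1 hF1]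
  | cast i =>
      have hθpos : 0 < θ i.castSucc := lt_of_lt_of_le hθ0 (hθmono.monotone (Fin.zero_le _))
      have hθlt1 : θ i.castSucc < 1 := by
        rw [← hθlast]; exact hθmono (Fin.castSucc_lt_last i)
      obtain ⟨hmN, hw1, hw2, hw3, hw4⟩ := hwin i
      set m := ⌊(N:ℝ) * θ i.castSucc⌋₊ with hm
      have hfl : (m : ℝ) ≤ (N:ℝ) * θ i.castSucc := Nat.floor_le (by positivity)
      have hfu : (N:ℝ) * θ i.castSucc < (m : ℝ) + 1 := Nat.lt_floor_add_one _
      have he1 : Tmap N 0 c c L (idx N m) = L (idx N m) :=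
        tmap_eq_self (by omega) (by push_cast; omega) (by push_cast at hw2 ⊢; omega)
      have he2 : Tmap N 0 c c L (idx N (m+1)) = L (idx N (m+1)) :=
        tmap_eq_self (by omega) (by push_cast; omega) (by push_cast at hw4 ⊢; omega)
      have hi1 := heightTL_interp L hmN hfl (le_of_lt hfu)
      have hi2 := heightTL_interp (Tmap N 0 c c L) hmN hfl (le_of_lt hfu)
      rw [he1, he2] at hi2
      have hNne : (N:ℝ) ≠ 0 := ne_of_gt hNpos
      apply mul_left_cancel₀ hNne
      rw [hi1, hi2]


/-! ### the counting / summation argument -/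

set_option maxHeartbeats 1000000 in
lemma main_bound {N : ℕ} (a b : ℝ) (ha : 0 ≤ a) (hb : 0 ≤ b) (c : ℕ)
    (Val Sep : Set (PairN N))
    (hphi : ∀ p, p ∈ TLset N → p ∈ Val →
      (PhiMap N c p ∈ TLset N ∧ PhiMap N c p ∈ Val ∧ PhiMap N c p ∈ Sep ∧
        twt0 N a b (PhiMap N c p) = twt0 N a b p))
    (hinj : ∀ p q, p ∈ TLset N → q ∈ TLset N → p ∈ Val → q ∈ Val →
      PhiMap N c p = PhiMap N c q → dataOf N c p = dataOf N c q → p = q)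
    (hM : (((N+2)^(4*c) : ℕ) : ℝ) ≤ Real.exp ((N:ℝ)^((4:ℝ)/5))) :
    Ptl0 N a b (Sep ∩ Val) ≥ Real.exp (-(N:ℝ)^((4:ℝ)/5)) * Ptl0 N a b Val := by
  classical
  have hwnn : ∀ p : PairN N, 0 ≤ twt0 N a b p :=
    fun p => mul_nonneg (pow_nonneg ha _) (pow_nonneg hb _)
  set w : ↥(TLset N) → ℝ := fun p => twt0 N a b p.val with hw
  unfold Ptl0
  set Z := ∑' p : TLset N, twt0 N a b p.val with hZdef
  set A := ∑' p : TLset N, (Sep ∩ Val).indicator (twt0 N a b) p.val with hAdef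
  set B := ∑' p : TLset N, Val.indicator (twt0 N a b) p.val with hBdef
  have hAnn : 0 ≤ A :=
    tsum_nonneg (fun p => Set.indicator_nonneg (fun q _ => hwnn q) _)
  suffices hkey : Real.exp (-(N:ℝ)^((4:ℝ)/5)) * B ≤ A by
    have hZ : 0 ≤ Z := tsum_nonneg (fun p => hwnn p.val)
    rcases eq_or_lt_of_le hZ with hZ0 | hZpos
    · rw [← hZ0, div_zero, div_zero, mul_zero]
    · rw [ge_iff_le, ← mul_div_assoc, div_le_div_iff_of_pos_right hZpos]
      exact hkey
  by_cases hsB : Summable (fun p : ↥(TLset N) => Val.indicator (twt0 N a b) p.val)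
  case neg =>
    rw [hBdef, tsum_eq_zero_of_not_summable hsB, mul_zero]
    exact hAnn
  -- summable case
  have hindle : ∀ p : ↥(TLset N),
      (Sep ∩ Val).indicator (twt0 N a b) p.val ≤ Val.indicator (twt0 N a b) p.val :=
    fun p => Set.indicator_le_indicator_of_subset Set.inter_subset_right
      (fun q => hwnn q) _
  have hsA : Summable (fun p : ↥(TLset N) => (Sep ∩ Val).indicator (twt0 N a b) p.val) :=
    Summable.of_nonneg_of_le
      (fun p => Set.indicator_nonneg (fun q _ => hwnn q) _) hindle hsB
  set SV : Set ↥(TLset N) := {p | p.val ∈ Sep ∩ Val} with hSV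
  set VD : DataT N c → Set ↥(TLset N) :=
    fun D => {p | p.val ∈ Val ∧ dataOf N c p.val = D} with hVD
  -- pointwise decomposition
  have hdec : ∀ p : ↥(TLset N), Val.indicator (twt0 N a b) p.val
      = ∑ D : DataT N c, (VD D).indicator w p := by
    intro p
    by_cases hp : p.val ∈ Val
    · rw [Set.indicator_of_mem hp]
      rw [Finset.sum_eq_single (dataOf N c p.val)]
      · rw [Set.indicator_of_mem (by exact ⟨hp, rfl⟩)]
      · intro D _ hD
        rw [Set.indicator_of_notMem]
        intro hmem
        exact hD (hmem.2 ▸ rfl)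
      · intro h; exact absurd (Finset.mem_univ _) h
    · rw [Set.indicator_of_notMem hp]
      symm
      apply Finset.sum_eq_zero
      intro D _
      rw [Set.indicator_of_notMem]
      exact fun hmem => hp hmem.1
  have hsummD : ∀ D : DataT N c, Summable ((VD D).indicator w) := by
    intro D
    apply Summable.of_nonneg_of_le
      (fun p => Set.indicator_nonneg (fun q hq => hwnn q.val) p)
      (fun p => ?_) hsB
    by_cases hp : p ∈ VD D
    · rw [Set.indicator_of_mem hp, Set.indicator_of_mem hp.1]
    · rw [Set.indicator_of_notMem hp]
      exact Set.indicator_nonneg (fun q _ => hwnn q) _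
  have hBsum : B = ∑ D : DataT N c, ∑' p : ↥(TLset N), (VD D).indicator w p := by
    rw [hBdef, tsum_congr hdec]
    exact Summable.tsum_finsetSum (fun D _ => hsummD D)
  -- A as a sum over the subtype SV
  have hAind : ∀ p : ↥(TLset N),
      (Sep ∩ Val).indicator (twt0 N a b) p.val = SV.indicator w p := by
    intro p
    by_cases hp : p.val ∈ Sep ∩ Val
    · rw [Set.indicator_of_mem hp, Set.indicator_of_mem (by exact hp)]
    · rw [Set.indicator_of_notMem hp, Set.indicator_of_notMem (by exact hp)]
  have hA' : A = ∑' s : ↥SV, w s.val := by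
    rw [hAdef, tsum_congr hAind, ← tsum_subtype]
  have hsSV : Summable (fun s : ↥SV => w s.val) :=
    summable_subtype_iff_indicator.mpr ((summable_congr hAind).1 hsA)
  -- each piece injects into SV
  have hpiece : ∀ D : DataT N c, ∑' p : ↥(TLset N), (VD D).indicator w p ≤ A := by
    intro D
    have htsub : ∑' p : ↥(TLset N), (VD D).indicator w p = ∑' q : ↥(VD D), w q.val :=
      (tsum_subtype (VD D) w).symm
    rw [htsub, hA']
    have hsVD : Summable (fun q : ↥(VD D) => w q.val) :=
      summable_subtype_iff_indicator.mpr (hsummD D)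
    have hmem := fun q : ↥(VD D) => hphi q.val.val q.val.prop q.prop.1
    refine Summable.tsum_le_tsum_of_inj (fun q : ↥(VD D) =>
        (⟨⟨PhiMap N c q.val.val, (hmem q).1⟩,
          ⟨(hmem q).2.2.1, (hmem q).2.1⟩⟩ : ↥SV)) ?_ ?_ ?_ hsVD hsSV
    · intro q q' hqq
      have h1 : PhiMap N c q.val.val = PhiMap N c q'.val.val := by
        have := congrArg (fun z => z.val.val) hqq
        exact this
      have h2 : dataOf N c q.val.val = dataOf N c q'.val.val := by
        rw [q.prop.2, q'.prop.2]
      have := hinj q.val.val q'.val.val q.val.prop q'.val.prop q.prop.1 q'.prop.1 h1 h2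
      exact Subtype.ext (Subtype.ext this)
    · intro s _
      exact hwnn s.val.val
    · intro q
      exact le_of_eq ((hmem q).2.2.2).symm
  have hBle : B ≤ (((N+2)^(4*c) : ℕ) : ℝ) * A := by
    rw [hBsum]
    calc ∑ D : DataT N c, ∑' p : ↥(TLset N), (VD D).indicator w p
        ≤ ∑ _D : DataT N c, A := Finset.sum_le_sum (fun D _ => hpiece D)
      _ = (Fintype.card (DataT N c) : ℝ) * A := by
          rw [Finset.sum_const, Finset.card_univ, nsmul_eq_mul]
      _ = (((N+2)^(4*c) : ℕ) : ℝ) * A := by rw [card_dataT]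
  calc Real.exp (-(N:ℝ)^((4:ℝ)/5)) * B
      ≤ Real.exp (-(N:ℝ)^((4:ℝ)/5)) * ((((N+2)^(4*c) : ℕ) : ℝ) * A) :=
        mul_le_mul_of_nonneg_left hBle (Real.exp_nonneg _)
    _ = (Real.exp (-(N:ℝ)^((4:ℝ)/5)) * (((N+2)^(4*c) : ℕ) : ℝ)) * A := by ring
    _ ≤ 1 * A := by
        apply mul_le_mul_of_nonneg_right _ hAnn
        have h1 : Real.exp (-(N:ℝ)^((4:ℝ)/5)) * (((N+2)^(4*c) : ℕ) : ℝ)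
            ≤ Real.exp (-(N:ℝ)^((4:ℝ)/5)) * Real.exp ((N:ℝ)^((4:ℝ)/5)) :=
          mul_le_mul_of_nonneg_left hM (Real.exp_nonneg _)
        rw [← Real.exp_add] at h1
        simpa using h1
    _ = A := one_mul A


/-! ### eventual conditions on N -/

lemma eventually_cond (c : ℕ) {d : ℕ} (θ u v : Fin (d+1) → ℝ) (hu0 : ∀ j, 0 < u j)
    (hgap' : ∀ j : Fin d, 0 < (1 - θ j.castSucc) - (v (Fin.last d) - u j.castSucc))
    (ε : ℝ) (hε : 0 < ε) :
    ∀ᶠ N : ℕ in Filter.atTop, (1 ≤ N ∧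
      (∀ j : Fin (d+1), (c:ℝ) + 2 ≤ (N:ℝ) * u j) ∧
      (∀ j : Fin d, (c:ℝ) + 2 ≤ (N:ℝ) * ((1 - θ j.castSucc) - (v (Fin.last d) - u j.castSucc))) ∧
      (((2*c : ℕ) : ℝ) ≤ ε * (N:ℝ)) ∧
      ((((N+2)^(4*c) : ℕ) : ℝ) ≤ Real.exp ((N:ℝ)^((4:ℝ)/5)))) := by
  have hcast : Filter.Tendsto (fun N : ℕ => (N:ℝ)) Filter.atTop Filter.atTop :=
    tendsto_natCast_atTop_atTop
  have h1 : ∀ᶠ N : ℕ in Filter.atTop, 1 ≤ N := Filter.eventually_ge_atTop 1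
  have h2 : ∀ᶠ N : ℕ in Filter.atTop, ∀ j : Fin (d+1), (c:ℝ) + 2 ≤ (N:ℝ) * u j :=
    Filter.eventually_all.2 (fun j =>
      (hcast.atTop_mul_const (hu0 j)).eventually_ge_atTop ((c:ℝ) + 2))
  have h3 : ∀ᶠ N : ℕ in Filter.atTop,
      ∀ j : Fin d, (c:ℝ) + 2 ≤ (N:ℝ) * ((1 - θ j.castSucc) - (v (Fin.last d) - u j.castSucc)) :=
    Filter.eventually_all.2 (fun j =>
      (hcast.atTop_mul_const (hgap' j)).eventually_ge_atTop ((c:ℝ) + 2))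
  have h4 : ∀ᶠ N : ℕ in Filter.atTop, ((2*c : ℕ) : ℝ) ≤ ε * (N:ℝ) :=
    (hcast.const_mul_atTop hε).eventually_ge_atTop _
  have h5 : ∀ᶠ N : ℕ in Filter.atTop,
      (((N+2)^(4*c) : ℕ) : ℝ) ≤ Real.exp ((N:ℝ)^((4:ℝ)/5)) := by
    open Real in
    have hlog := isLittleO_log_rpow_atTop (show (0:ℝ) < 4/5 by norm_num)
    have hb := hlog.def (show (0:ℝ) < 1/(8*(c:ℝ)+8) by positivity)
    have hev := hcast.eventually hb
    filter_upwards [hev, Filter.eventually_ge_atTop 2] with N hN1 hN2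
    have hN2R : (2:ℝ) ≤ (N:ℝ) := by exact_mod_cast hN2
    have hNpos : (0:ℝ) < (N:ℝ) := by linarith
    have hrpow_nn : (0:ℝ) ≤ (N:ℝ)^((4:ℝ)/5) := Real.rpow_nonneg (le_of_lt hNpos) _
    have hlogN_nn : (0:ℝ) ≤ Real.log N := Real.log_nonneg (by linarith)
    rw [Real.norm_eq_abs, Real.norm_eq_abs, abs_of_nonneg hlogN_nn,
      abs_of_nonneg hrpow_nn] at hN1
    have hle1 : Real.log ((N:ℝ)+2) ≤ 2 * Real.log N := by
      have h' : ((N:ℝ)+2) ≤ (N:ℝ)^(2:ℕ) := by nlinarith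
      calc Real.log ((N:ℝ)+2) ≤ Real.log ((N:ℝ)^(2:ℕ)) := Real.log_le_log (by linarith) h'
        _ = 2 * Real.log N := by rw [Real.log_pow]; norm_num
    have hkey : Real.log ((N:ℝ)+2) * (4*c : ℕ) ≤ (N:ℝ)^((4:ℝ)/5) := by
      have hc4 : ((4*c : ℕ) : ℝ) = 4*(c:ℝ) := by push_cast; ring
      rw [hc4]
      have h8 : Real.log ((N:ℝ)+2) * (4*(c:ℝ))
          ≤ (2 * Real.log N) * (4*(c:ℝ)) := by
        apply mul_le_mul_of_nonneg_right hle1 (by positivity)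
      have h9 : (2 * Real.log N) * (4*(c:ℝ)) = (8*(c:ℝ)) * Real.log N := by ring
      have h10 : (8*(c:ℝ)) * Real.log N ≤ (8*(c:ℝ)) * ((1/(8*(c:ℝ)+8)) * (N:ℝ)^((4:ℝ)/5)) :=
        mul_le_mul_of_nonneg_left hN1 (by positivity)
      have h11 : (8*(c:ℝ)) * ((1/(8*(c:ℝ)+8)) * (N:ℝ)^((4:ℝ)/5)) ≤ (N:ℝ)^((4:ℝ)/5) := by
        rw [← mul_assoc]
        have : (8*(c:ℝ)) * (1/(8*(c:ℝ)+8)) ≤ 1 := by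
          rw [mul_one_div, div_le_one (by positivity)]
          linarith
        nlinarith
      linarith
    have hpos2 : (0:ℝ) < (N:ℝ)+2 := by linarith
    have hcalc : (((N+2)^(4*c) : ℕ) : ℝ) = ((N:ℝ)+2)^((4*c : ℕ)) := by push_cast; ring
    rw [hcalc, ← Real.rpow_natCast ((N:ℝ)+2) (4*c), Real.rpow_def_of_pos hpos2]
    exact Real.exp_le_exp.2 hkey
  filter_upwards [h1, h2, h3, h4, h5] with N e1 e2 e3 e4 e5
  exact ⟨e1, e2, e3, e4, e5⟩

end Stmt9

/-- Proposition 2.7 / 3.9 (key estimate): under the open TASEP two-layer measure, conditionally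
on the height profile lying in prescribed windows at the locations `θ_j`, the two layers are
separated by more than `r` at all but at most `⌈εN⌉` sites, with probability at least
`e^{-N^{4/5}}`. -/
theorem stmt9 (a b : ℝ) (ha : 0 ≤ a) (hb : 0 ≤ b) (hab : a * b < 1)
    (d : ℕ) (hd : 1 ≤ d) (θ u v : Fin (d+1) → ℝ)
    (hθ0 : 0 < θ 0) (hθmono : StrictMono θ) (hθlast : θ (Fin.last d) = 1)
    (hu0 : ∀ j, 0 < u j) (huv : ∀ j, u j < v j)
    (hgap : ∀ j : Fin d, v (Fin.last d) - u j.castSucc < 1 - θ j.castSucc)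
    (r : ℕ) (hr : 1 ≤ r) (ε : ℝ) (hε : 0 < ε) :
    ∃ N₀ : ℕ, ∀ N : ℕ, N₀ ≤ N →
      Ptl0 N a b
          ({p | (Finset.univ.filter (fun j : Fin (N+1) => p.1 j - p.2 j ≤ (r : ℤ))).card ≤
              Nat.ceil (ε * N)} ∩
            {p | ∀ j : Fin (d+1), heightTL N p.1 (θ j) ∈ Set.Ioo (u j) (v j)}) ≥
        Real.exp (-(N : ℝ) ^ ((4 : ℝ) / 5)) *
          Ptl0 N a b {p | ∀ j : Fin (d+1), heightTL N p.1 (θ j) ∈ Set.Ioo (u j) (v j)} := by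
  classical
  have hgap' : ∀ j : Fin d, 0 < (1 - θ j.castSucc) - (v (Fin.last d) - u j.castSucc) :=
    fun j => by have := hgap j; linarith
  obtain ⟨N₀, hN₀⟩ := Filter.eventually_atTop.mp
    (Stmt9.eventually_cond (r+1) θ u v hu0 hgap' ε hε)
  refine ⟨N₀, fun N hN => ?_⟩
  obtain ⟨hN1, hC2, hC3, hC4, hC5⟩ := hN₀ N hN
  have hfacts := fun (p : Stmt9.PairN N) (hp : p ∈ TLset N)
      (hval : ∀ j : Fin (d+1), heightTL N p.1 (θ j) ∈ Set.Ioo (u j) (v j)) =>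
    Stmt9.val_facts (c := r+1) hd hθ0 hθmono hθlast hN1 hC2 hC3 hp hval
  apply Stmt9.main_bound a b ha hb (r+1)
  · -- hphi
    intro p hp hval
    obtain ⟨hW1, hW2, hW3⟩ := hfacts p hp hval
    refine ⟨Stmt9.phi_mem_TL hp hW2, ?_, ?_, Stmt9.phi_weight a b hp hW1 hW2⟩
    · intro j
      show heightTL N (Stmt9.PhiMap N (r+1) p).1 (θ j) ∈ Set.Ioo (u j) (v j)
      have he : (Stmt9.PhiMap N (r+1) p).1 = Stmt9.Tmap N 0 (r+1) (r+1) p.1 := rfl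
      rw [he, hW3 j]
      exact hval j
    · -- Sep membership
      have hcard := Stmt9.phi_sep_card (c := r+1) (r := r) hp (by push_cast; omega)
      show (Finset.univ.filter (fun j : Fin (N+1) =>
        (Stmt9.PhiMap N (r+1) p).1 j - (Stmt9.PhiMap N (r+1) p).2 j ≤ (r : ℤ))).card ≤
          Nat.ceil (ε * N)
      have h2c : 2 * (r+1) ≤ Nat.ceil (ε * (N:ℝ)) := by
        calc 2 * (r+1) = Nat.ceil (((2*(r+1) : ℕ) : ℝ)) := by rw [Nat.ceil_natCast]
          _ ≤ Nat.ceil (ε * (N:ℝ)) := Nat.ceil_le_ceil hC4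
      exact le_trans hcard h2c
  · -- hinj
    intro p q hp hq hvp hvq hPhi hdata
    obtain ⟨hW1p, hW2p, -⟩ := hfacts p hp hvp
    obtain ⟨hW1q, hW2q, -⟩ := hfacts q hq hvq
    exact Stmt9.phi_inj hp hq hW1p hW2p hW1q hW2q hPhi hdata
  · -- hM
    exact hC5
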